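/- For m ∈ ℤ, r, s ∈ 1/2 + ℤ, λ ∈ ℂ*, α ∈ ℂ, t = ±1, the operators on ℂ[x] given by L_m f(x) = λ^m (x + mα) f(x + m) and I_r f(x) = −2 t^{2r} λ^r α f(x + r) satisfy [L_m, I_r] f = −r I_{m+r} f and [I_r, I_s] f = 0 for all f ∈ ℂ[x]. -/

import Mathlib

open Polynomial

/- Half-integers are encoded by their doubles: `r ∈ 1/2 + ℤ` corresponds to an odd
integer `a = 2r`; `λ^r` means `ν^a` for a fixed square root `ν` of `λ`, and
`t^{2r} = t^a`. -/

/-- `L_m f(x) = λ^m (x + m α) f(x + m)` with `λ = ν²`. -/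
noncomputable def Lw (nu α : ℂ) (m : ℤ) (f : Polynomial ℂ) : Polynomial ℂ :=
  (nu ^ 2) ^ m • ((X + C ((m : ℂ) * α)) * f.comp (X + C (m : ℂ)))

/-- `I_r f(x) = −2 t^{2r} λ^r α f(x + r)` for `r = a/2`, `a` odd. -/
noncomputable def Ie (t nu α : ℂ) (a : ℤ) (f : Polynomial ℂ) : Polynomial ℂ :=
  (-2 * t ^ a * nu ^ a * α) • f.comp (X + C ((a : ℂ) / 2))

lemma comp_comp (f : Polynomial ℂ) (u v : ℂ) :
    (f.comp (X + C u)).comp (X + C v) = f.comp (X + C (u + v)) := by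
  rw [Polynomial.comp_assoc]
  congr 1
  simp [add_comp]
  ring

theorem stmt3 (t nu α : ℂ) (ht : t = 1 ∨ t = -1) (hnu : nu ≠ 0)
    (m a b : ℤ) (ha : Odd a) (hb : Odd b) (f : Polynomial ℂ) :
    Lw nu α m (Ie t nu α a f) - Ie t nu α a (Lw nu α m f)
        = (-(a : ℂ) / 2) • Ie t nu α (a + 2 * m) f ∧
    Ie t nu α a (Ie t nu α b f) - Ie t nu α b (Ie t nu α a f) = 0 := by
  have htne : t ≠ 0 := by rcases ht with h | h <;> simp [h]
  have h1 : t ^ (a + 2 * m) = t ^ a := by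
    rw [zpow_add₀ htne, zpow_mul]
    have : t ^ (2 : ℤ) = 1 := by rcases ht with h | h <;> norm_num [h]
    simp [this]
  have h2 : nu ^ (a + 2 * m) = nu ^ a * (nu ^ 2) ^ m := by
    rw [zpow_add₀ hnu, zpow_mul]
    norm_num
  constructor
  · simp only [Lw, Ie, smul_comp, mul_comp, add_comp, X_comp, C_comp, comp_comp,
      smul_smul, Algebra.mul_smul_comm, Algebra.smul_mul_assoc, h1, h2]
    rw [show ((m : ℂ) + (a : ℂ) / 2) = (a : ℂ) / 2 + (m : ℂ) from by ring,
      show (((a + 2 * m : ℤ) : ℂ)) / 2 = (a : ℂ) / 2 + (m : ℂ) from by push_cast; ring]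
    rw [show (-(a : ℂ) / 2) = -((a : ℂ) / 2) from by ring]
    simp only [smul_eq_C_mul, C_mul, C_neg]
    ring
  · simp only [Ie, smul_comp, comp_comp, smul_smul]
    rw [show ((b : ℂ) / 2 + (a : ℂ) / 2) = (a : ℂ) / 2 + (b : ℂ) / 2 from by ring]
    rw [sub_eq_zero]
    ring_nf
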